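/- Let f : ℝⁿ → ℝ be differentiable with L-Lipschitz gradient on ℝⁿ, and let e₁,…,eₙ denote the standard basis of ℝⁿ. Then for every x ∈ ℝⁿ and δ > 0, both the forward finite-difference approximation G_f(x,δ) := δ⁻¹ Σ_{i=1}^n (f(x + δe_i) − f(x)) e_i and the central finite-difference approximation G_c(x,δ) := (2δ)⁻¹ Σ_{i=1}^n (f(x + δe_i) − f(x − δe_i)) e_i satisfy ‖G(x,δ) − ∇f(x)‖ ≤ L√n·δ/2. -/

import Mathlib

open Set Filter intervalIntegral RealInnerProductSpace

variable {E : Type*} [NormedAddCommGroup E] [InnerProductSpace ℝ E]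

lemma fderiv_apply_eq_inner_gradient (f : E → ℝ) [CompleteSpace E] (y w : E) :
    fderiv ℝ f y w = ⟪gradient f y, w⟫ := by
  rw [gradient, ← InnerProductSpace.toDual_apply_apply, LinearIsometryEquiv.apply_symm_apply]

lemma taylor_lipschitz_grad (f : E → ℝ) [CompleteSpace E]
    (hdiff : Differentiable ℝ f) (L : ℝ) (hL : 0 ≤ L)
    (hlip : ∀ x y : E, ‖gradient f x - gradient f y‖ ≤ L * ‖x - y‖)
    (x v : E) : |f (x + v) - f x - ⟪gradient f x, v⟫| ≤ L / 2 * ‖v‖ ^ 2 := by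
  -- gradient is continuous
  have hgc : Continuous (gradient f) := by
    refine (LipschitzWith.of_dist_le_mul (K := ⟨L, hL⟩) ?_).continuous
    intro a b; rw [dist_eq_norm, dist_eq_norm]; exact hlip a b
  set g' : ℝ → ℝ := fun t => ⟪gradient f (x + t • v), v⟫ with hg'def
  have hg'cont : Continuous g' := by
    exact (hgc.comp (continuous_const.add (continuous_id.smul continuous_const))).inner
      continuous_const
  have hg : ∀ t : ℝ, HasDerivAt (fun t : ℝ => f (x + t • v)) (g' t) t := by
    intro t
    have h1 : HasDerivAt (fun t : ℝ => x + t • v) v t := by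
      simpa using ((hasDerivAt_id t).smul_const v).const_add x
    have := ((hdiff (x + t • v)).hasFDerivAt).comp_hasDerivAt t h1
    exact this.congr_deriv (fderiv_apply_eq_inner_gradient f _ _)
  have hint : ∫ t in (0:ℝ)..1, g' t = f (x + v) - f x := by
    have := intervalIntegral.integral_eq_sub_of_hasDerivAt
      (fun t _ => hg t) (hg'cont.intervalIntegrable 0 1)
    simpa using this
  have key : f (x + v) - f x - ⟪gradient f x, v⟫
      = ∫ t in (0:ℝ)..1, (g' t - ⟪gradient f x, v⟫) := by
    rw [intervalIntegral.integral_sub (hg'cont.intervalIntegrable 0 1)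
      (intervalIntegrable_const), hint]
    simp
  rw [key]
  have hb : ∀ t ∈ Set.Icc (0:ℝ) 1, |g' t - ⟪gradient f x, v⟫| ≤ L * ‖v‖ ^ 2 * t := by
    intro t ht
    have : g' t - ⟪gradient f x, v⟫ = ⟪gradient f (x + t • v) - gradient f x, v⟫ := by
      rw [inner_sub_left]
    rw [this]
    calc |⟪gradient f (x + t • v) - gradient f x, v⟫|
        ≤ ‖gradient f (x + t • v) - gradient f x‖ * ‖v‖ := abs_real_inner_le_norm _ _
      _ ≤ (L * ‖x + t • v - x‖) * ‖v‖ := by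
          gcongr; exact hlip _ _
      _ = L * ‖v‖ ^ 2 * t := by
          have : x + t • v - x = t • v := by abel
          rw [this, norm_smul, Real.norm_eq_abs, abs_of_nonneg ht.1]; ring
  calc |∫ t in (0:ℝ)..1, (g' t - ⟪gradient f x, v⟫)|
      ≤ ∫ t in (0:ℝ)..1, |g' t - ⟪gradient f x, v⟫| := by
        exact intervalIntegral.abs_integral_le_integral_abs zero_le_one
    _ ≤ ∫ t in (0:ℝ)..1, L * ‖v‖ ^ 2 * t := by
        refine intervalIntegral.integral_mono_on zero_le_one
          ((hg'cont.sub continuous_const).abs.intervalIntegrable 0 1)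
          ((continuous_const.mul continuous_id).intervalIntegrable 0 1) hb
    _ = L / 2 * ‖v‖ ^ 2 := by
        rw [intervalIntegral.integral_const_mul, integral_id]; ring

lemma norm_le_sqrt_card {n : ℕ} (w : EuclideanSpace ℝ (Fin n)) (C : ℝ) (hC : 0 ≤ C)
    (h : ∀ j, |w j| ≤ C) : ‖w‖ ≤ Real.sqrt n * C := by
  rw [EuclideanSpace.norm_eq]
  have h1 : ∑ i, ‖w i‖ ^ 2 ≤ (n : ℝ) * C ^ 2 := by
    calc ∑ i, ‖w i‖ ^ 2 ≤ ∑ _i : Fin n, C ^ 2 := by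
          refine Finset.sum_le_sum fun i _ => ?_
          rw [Real.norm_eq_abs]
          exact pow_le_pow_left₀ (abs_nonneg _) (h i) 2
      _ = (n : ℝ) * C ^ 2 := by simp [mul_comm]
  calc Real.sqrt (∑ i, ‖w i‖ ^ 2) ≤ Real.sqrt ((n : ℝ) * C ^ 2) := Real.sqrt_le_sqrt h1
    _ = Real.sqrt n * C := by
        rw [Real.sqrt_mul (Nat.cast_nonneg n), Real.sqrt_sq hC]

lemma sum_smul_single_apply {n : ℕ} (c : Fin n → ℝ) (j : Fin n) :
    (∑ i, c i • EuclideanSpace.single i (1:ℝ)) j = c j := by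
  have : ∀ (s : Finset (Fin n)), (∑ i ∈ s, c i • EuclideanSpace.single i (1:ℝ)) j
      = ∑ i ∈ s, (c i • EuclideanSpace.single i (1:ℝ)) j := by
    intro s
    induction s using Finset.induction with
    | empty => rfl
    | insert _ _ ha ih => rw [Finset.sum_insert ha, Finset.sum_insert ha, ← ih]; rfl
  rw [this]
  simp [EuclideanSpace.single_apply]

theorem finite_difference_error_bounds {n : ℕ}
    (f : EuclideanSpace ℝ (Fin n) → ℝ)
    (hdiff : Differentiable ℝ f)
    (L : ℝ) (hL : 0 < L)
    (hlip : ∀ x y : EuclideanSpace ℝ (Fin n),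
      ‖gradient f x - gradient f y‖ ≤ L * ‖x - y‖)
    (e : Fin n → EuclideanSpace ℝ (Fin n))
    (he : ∀ i, e i = EuclideanSpace.single i (1:ℝ))
    (x : EuclideanSpace ℝ (Fin n)) (δ : ℝ) (hδ : 0 < δ) :
    ‖(δ⁻¹ • ∑ i : Fin n, (f (x + δ • e i) - f x) • e i) - gradient f x‖ ≤
      L * Real.sqrt n * δ / 2 ∧
    ‖((2*δ)⁻¹ • ∑ i : Fin n, (f (x + δ • e i) - f (x - δ • e i)) • e i) - gradient f x‖ ≤
      L * Real.sqrt n * δ / 2 := by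
  have he' : e = fun i => EuclideanSpace.single i (1:ℝ) := funext he
  subst he'
  set g := gradient f x with hg
  have hC : (0:ℝ) ≤ L * δ / 2 := by positivity
  -- per-coordinate Taylor bounds
  have hfw : ∀ j : Fin n,
      |f (x + δ • EuclideanSpace.single j (1:ℝ)) - f x - δ * g j| ≤ L / 2 * δ ^ 2 := by
    intro j
    have hA := taylor_lipschitz_grad f hdiff L hL.le hlip x (δ • EuclideanSpace.single j (1:ℝ))
    have h1 : ⟪g, δ • EuclideanSpace.single j (1:ℝ)⟫ = δ * g j := by
      rw [real_inner_smul_right, EuclideanSpace.inner_single_right]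
      simp
    have h2 : ‖δ • EuclideanSpace.single j (1:ℝ)‖ ^ 2 = δ ^ 2 := by
      rw [norm_smul, EuclideanSpace.norm_single, norm_one, Real.norm_eq_abs, abs_of_pos hδ]; ring
    rw [h1, h2] at hA
    exact hA
  have hbw : ∀ j : Fin n,
      |f (x - δ • EuclideanSpace.single j (1:ℝ)) - f x + δ * g j| ≤ L / 2 * δ ^ 2 := by
    intro j
    have hA := taylor_lipschitz_grad f hdiff L hL.le hlip x (-(δ • EuclideanSpace.single j (1:ℝ)))
    have h1 : ⟪g, -(δ • EuclideanSpace.single j (1:ℝ))⟫ = -(δ * g j) := by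
      rw [inner_neg_right, real_inner_smul_right, EuclideanSpace.inner_single_right]
      simp
    have h2 : ‖-(δ • EuclideanSpace.single j (1:ℝ))‖ ^ 2 = δ ^ 2 := by
      rw [norm_neg, norm_smul, EuclideanSpace.norm_single, norm_one, Real.norm_eq_abs, abs_of_pos hδ]; ring
    rw [h1, h2] at hA
    have hx : x + -(δ • EuclideanSpace.single j (1:ℝ)) = x - δ • EuclideanSpace.single j (1:ℝ) := by
      abel
    rw [hx] at hA
    simpa [sub_neg_eq_add] using hA
  constructor
  · refine le_trans (norm_le_sqrt_card _ (L * δ / 2) hC fun j => ?_) (le_of_eq (by ring))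
    have happ : ((δ⁻¹ • ∑ i : Fin n, (f (x + δ • EuclideanSpace.single i (1:ℝ)) - f x) •
        EuclideanSpace.single i (1:ℝ)) - g) j
        = δ⁻¹ * ((f (x + δ • EuclideanSpace.single j (1:ℝ)) - f x) - δ * g j) := by
      have h1 : ((δ⁻¹ • ∑ i : Fin n, (f (x + δ • EuclideanSpace.single i (1:ℝ)) - f x) •
          EuclideanSpace.single i (1:ℝ)) - g) j
          = δ⁻¹ * (∑ i : Fin n, (f (x + δ • EuclideanSpace.single i (1:ℝ)) - f x) •
          EuclideanSpace.single i (1:ℝ)) j - g j := rfl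
      rw [h1, sum_smul_single_apply]
      field_simp
    rw [happ, abs_mul, abs_of_pos (inv_pos.mpr hδ)]
    calc δ⁻¹ * |f (x + δ • EuclideanSpace.single j (1:ℝ)) - f x - δ * g j|
        ≤ δ⁻¹ * (L / 2 * δ ^ 2) := by gcongr; exact hfw j
      _ = L * δ / 2 := by field_simp
  · refine le_trans (norm_le_sqrt_card _ (L * δ / 2) hC fun j => ?_) (le_of_eq (by ring))
    have happ : (((2*δ)⁻¹ • ∑ i : Fin n, (f (x + δ • EuclideanSpace.single i (1:ℝ)) -
        f (x - δ • EuclideanSpace.single i (1:ℝ))) • EuclideanSpace.single i (1:ℝ)) - g) j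
        = (2*δ)⁻¹ * ((f (x + δ • EuclideanSpace.single j (1:ℝ)) -
          f (x - δ • EuclideanSpace.single j (1:ℝ))) - 2 * δ * g j) := by
      have h1 : (((2*δ)⁻¹ • ∑ i : Fin n, (f (x + δ • EuclideanSpace.single i (1:ℝ)) -
          f (x - δ • EuclideanSpace.single i (1:ℝ))) • EuclideanSpace.single i (1:ℝ)) - g) j
          = (2*δ)⁻¹ * (∑ i : Fin n, (f (x + δ • EuclideanSpace.single i (1:ℝ)) -
          f (x - δ • EuclideanSpace.single i (1:ℝ))) • EuclideanSpace.single i (1:ℝ)) j - g j := rfl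
      rw [h1, sum_smul_single_apply]
      field_simp
    rw [happ, abs_mul, abs_of_pos (inv_pos.mpr (by linarith))]
    have hcomb : |f (x + δ • EuclideanSpace.single j (1:ℝ)) -
        f (x - δ • EuclideanSpace.single j (1:ℝ)) - 2 * δ * g j| ≤ L * δ ^ 2 := by
      have := abs_add_le (f (x + δ • EuclideanSpace.single j (1:ℝ)) - f x - δ * g j)
        (-(f (x - δ • EuclideanSpace.single j (1:ℝ)) - f x + δ * g j))
      rw [abs_neg] at this
      calc |f (x + δ • EuclideanSpace.single j (1:ℝ)) -
          f (x - δ • EuclideanSpace.single j (1:ℝ)) - 2 * δ * g j|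
          = |(f (x + δ • EuclideanSpace.single j (1:ℝ)) - f x - δ * g j) +
            -(f (x - δ • EuclideanSpace.single j (1:ℝ)) - f x + δ * g j)| := by ring_nf
        _ ≤ _ := this
        _ ≤ L / 2 * δ ^ 2 + L / 2 * δ ^ 2 := add_le_add (hfw j) (hbw j)
        _ = L * δ ^ 2 := by ring
    calc (2*δ)⁻¹ * |f (x + δ • EuclideanSpace.single j (1:ℝ)) -
        f (x - δ • EuclideanSpace.single j (1:ℝ)) - 2 * δ * g j|
        ≤ (2*δ)⁻¹ * (L * δ ^ 2) := by gcongr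
      _ = L * δ / 2 := by field_simp
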